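/- Let U be an n×n complex unitary matrix and let (a_1, …, a_n) be an orthonormal basis of ℂ^n consisting of eigenvectors of U, with U a_j = λ_j a_j for each j. Then the adjugate of I − U is given by adj(I − U) = Σ_{j=1}^n ( Π_{i ≠ j} (1 − λ_i) ) · a_j a_j^*, where a_j a_j^* denotes the rank-one matrix whose (p,q) entry is (a_j)_p · conj((a_j)_q). -/

import Mathlib

open scoped Matrix

/-- For an `n × n` complex unitary matrix `U` with an orthonormal basis of eigenvectors
`a j` (eigenvalues `lam j`), the adjugate of `1 - U` is
`∑ j, (∏_{i ≠ j} (1 - lam i)) • (a j) (a j)^*`. -/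
theorem stmt0 {n : ℕ} (U : Matrix (Fin n) (Fin n) ℂ)
    (hU : U ∈ Matrix.unitaryGroup (Fin n) ℂ)
    (a : Fin n → (Fin n → ℂ)) (lam : Fin n → ℂ)
    (horth : ∀ i j, dotProduct (star (a i)) (a j) = if i = j then 1 else 0)
    (heig : ∀ j, U.mulVec (a j) = lam j • a j) :
    (1 - U).adjugate =
      ∑ j : Fin n, (∏ i ∈ Finset.univ.erase j, (1 - lam i)) •
        Matrix.vecMulVec (a j) (star (a j)) := by
  classical
  set A : Matrix (Fin n) (Fin n) ℂ := Matrix.of fun p j => a j p with hA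
  have hAhA : Aᴴ * A = 1 := by
    ext i j
    have := horth i j
    simpa [Matrix.mul_apply, Matrix.conjTranspose_apply, dotProduct,
      Matrix.one_apply, hA] using this
  have hAAh : A * Aᴴ = 1 := mul_eq_one_comm.mp hAhA
  have hUA : U * A = A * Matrix.diagonal lam := by
    ext p j
    have := congrFun (heig j) p
    simp only [Matrix.mulVec, dotProduct, Pi.smul_apply, smul_eq_mul] at this
    rw [Matrix.mul_diagonal, Matrix.mul_apply]
    simp only [hA, Matrix.of_apply]
    rw [this]; ring
  have hU' : U = A * Matrix.diagonal lam * Aᴴ := by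
    calc U = U * (A * Aᴴ) := by rw [hAAh, mul_one]
    _ = (U * A) * Aᴴ := (mul_assoc _ _ _).symm
    _ = A * Matrix.diagonal lam * Aᴴ := by rw [hUA]
  have hsub : (1 : Matrix (Fin n) (Fin n) ℂ) - U
      = A * Matrix.diagonal (fun i => 1 - lam i) * Aᴴ := by
    have h1 : Matrix.diagonal (fun i : Fin n => (1 : ℂ) - lam i)
        = 1 - Matrix.diagonal lam := by
      ext i j
      by_cases h : i = j <;>
        simp [Matrix.diagonal_apply, Matrix.sub_apply, Matrix.one_apply, h]
    rw [h1, Matrix.mul_sub, Matrix.sub_mul, mul_one, hAAh, hU']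
  have hadjA : Matrix.adjugate A = A.det • Aᴴ := by
    calc Matrix.adjugate A = (Aᴴ * A) * Matrix.adjugate A := by rw [hAhA, one_mul]
    _ = Aᴴ * (A * Matrix.adjugate A) := mul_assoc _ _ _
    _ = A.det • Aᴴ := by rw [Matrix.mul_adjugate]; simp [Matrix.mul_smul, mul_one]
  have hadjAh : Matrix.adjugate Aᴴ = Aᴴ.det • A := by
    calc Matrix.adjugate Aᴴ = (A * Aᴴ) * Matrix.adjugate Aᴴ := by rw [hAAh, one_mul]
    _ = A * (Aᴴ * Matrix.adjugate Aᴴ) := mul_assoc _ _ _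
    _ = Aᴴ.det • A := by rw [Matrix.mul_adjugate]; simp [Matrix.mul_smul, mul_one]
  have hdet : Aᴴ.det * A.det = 1 := by
    rw [← Matrix.det_mul, hAhA, Matrix.det_one]
  set c : Fin n → ℂ := fun j => ∏ i ∈ Finset.univ.erase j, (1 - lam i) with hc
  have hadj : (1 - U).adjugate = A * Matrix.diagonal c * Aᴴ := by
    rw [hsub, Matrix.adjugate_mul_distrib, Matrix.adjugate_mul_distrib,
      Matrix.adjugate_diagonal, hadjA, hadjAh]
    simp only [Matrix.smul_mul, Matrix.mul_smul, smul_smul]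
    rw [mul_comm A.det, hdet, one_smul, ← mul_assoc]
  rw [hadj]
  ext p q
  simp only [Matrix.mul_apply, Matrix.diagonal_apply, mul_ite, mul_zero,
    Finset.sum_ite_eq', Finset.mem_univ, if_true,
    Matrix.conjTranspose_apply, Matrix.sum_apply, Matrix.smul_apply,
    Matrix.vecMulVec_apply, Pi.star_apply, smul_eq_mul]
  refine Finset.sum_congr rfl fun k _ => ?_
  simp only [hA, Matrix.of_apply, hc]
  ring
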